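/- The skeleton of the triangular-prismatic uniform partition De(A₂ × ℤ) embeds with scale 2 into ℤ^4: on the graph with vertex set ℤ^3 where x is adjacent to y iff x − y ∈ {±(1,0,0), ±(0,1,0), ±(1,−1,0), ±(0,0,1)}, the map f(a,b,c) = (a, b, a+b, 2c) satisfies 2·d(x, y) = Σ_{i=1}^4 |f(x)_i − f(y)_i| for all vertices x, y, where d is the graph distance. -/
import Mathlib


/-- The triangular-prismatic graph (skeleton of the uniform partition of 3-space by
triangular prisms, `De(A₂ × ℤ)`): vertex set `ℤ^3`, with `x` adjacent to `y` iff
`x − y ∈ {±(1,0,0), ±(0,1,0), ±(1,−1,0), ±(0,0,1)}`. -/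
def triPrismaticGraph : SimpleGraph (ℤ × ℤ × ℤ) :=
  SimpleGraph.fromRel (fun x y =>
    x - y = (1, 0, 0) ∨ x - y = (0, 1, 0) ∨ x - y = (1, -1, 0) ∨ x - y = (0, 0, 1))

/-- candidate distance function -/
def triN (p q r : ℤ) : ℕ :=
  max p.natAbs (max q.natAbs (p + q).natAbs) + r.natAbs

lemma triN_dec (p q r : ℤ) (h : ¬(p = 0 ∧ q = 0 ∧ r = 0)) :
    ∃ g1 g2 g3 : ℤ,
      ((g1, g2, g3) = ((1:ℤ), (0:ℤ), (0:ℤ)) ∨ (g1, g2, g3) = (-1, 0, 0) ∨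
       (g1, g2, g3) = (0, 1, 0) ∨ (g1, g2, g3) = (0, -1, 0) ∨
       (g1, g2, g3) = (1, -1, 0) ∨ (g1, g2, g3) = (-1, 1, 0) ∨
       (g1, g2, g3) = (0, 0, 1) ∨ (g1, g2, g3) = (0, 0, -1)) ∧
      triN (p - g1) (q - g2) (r - g3) + 1 = triN p q r := by
  rcases lt_trichotomy r 0 with hr | hr | hr
  · exact ⟨0, 0, -1, by tauto, by simp [triN]; omega⟩
  · rcases lt_trichotomy p 0 with hp | hp | hp
    · rcases le_or_gt q 0 with hq | hq
      · exact ⟨-1, 0, 0, by tauto, by simp [triN]; omega⟩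
      · exact ⟨-1, 1, 0, by tauto, by simp [triN]; omega⟩
    · rcases lt_trichotomy q 0 with hq | hq | hq
      · exact ⟨0, -1, 0, by tauto, by simp [triN]; omega⟩
      · omega
      · exact ⟨0, 1, 0, by tauto, by simp [triN]; omega⟩
    · rcases le_or_gt 0 q with hq | hq
      · exact ⟨1, 0, 0, by tauto, by simp [triN]; omega⟩
      · exact ⟨1, -1, 0, by tauto, by simp [triN]; omega⟩
  · exact ⟨0, 0, 1, by tauto, by simp [triN]; omega⟩

lemma triN_step (p q r g1 g2 g3 : ℤ)
    (hg : (g1, g2, g3) = ((1:ℤ), (0:ℤ), (0:ℤ)) ∨ (g1, g2, g3) = (-1, 0, 0) ∨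
       (g1, g2, g3) = (0, 1, 0) ∨ (g1, g2, g3) = (0, -1, 0) ∨
       (g1, g2, g3) = (1, -1, 0) ∨ (g1, g2, g3) = (-1, 1, 0) ∨
       (g1, g2, g3) = (0, 0, 1) ∨ (g1, g2, g3) = (0, 0, -1)) :
    triN (p + g1) (q + g2) (r + g3) ≤ triN p q r + 1 := by
  rcases hg with h|h|h|h|h|h|h|h <;>
    (injection h with h1 h'; injection h' with h2 h3; subst h1; subst h2; subst h3;
     simp [triN]; omega)

lemma walk_exists : ∀ (n : ℕ) (x y : ℤ × ℤ × ℤ),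
    triN (x.1 - y.1) (x.2.1 - y.2.1) (x.2.2 - y.2.2) ≤ n →
    ∃ w : triPrismaticGraph.Walk x y, w.length ≤ n := by
  intro n
  induction n with
  | zero =>
    intro x y h
    have : x = y := by
      simp [triN] at h
      have : x.1 = y.1 ∧ x.2.1 = y.2.1 ∧ x.2.2 = y.2.2 := by omega
      exact Prod.ext this.1 (Prod.ext this.2.1 this.2.2)
    subst this
    exact ⟨SimpleGraph.Walk.nil, by simp⟩
  | succ n ih =>
    intro x y h
    by_cases hxy : x = y
    · subst hxy; exact ⟨SimpleGraph.Walk.nil, by simp⟩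
    · have hne : ¬(x.1 - y.1 = 0 ∧ x.2.1 - y.2.1 = 0 ∧ x.2.2 - y.2.2 = 0) := by
        intro hc
        exact hxy (Prod.ext (by omega) (Prod.ext (by omega) (by omega)))
      obtain ⟨g1, g2, g3, hg, hdec⟩ := triN_dec _ _ _ hne
      set z : ℤ × ℤ × ℤ := (x.1 - g1, x.2.1 - g2, x.2.2 - g3) with hz
      have hadj : triPrismaticGraph.Adj x z := by
        rw [triPrismaticGraph, SimpleGraph.fromRel_adj]
        constructor
        · intro hc
          have h1 : x.1 = x.1 - g1 := congrArg Prod.fst hc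
          have h2 : x.2.1 = x.2.1 - g2 := congrArg (fun v => v.2.1) hc
          have h3 : x.2.2 = x.2.2 - g3 := congrArg (fun v => v.2.2) hc
          have e1 : g1 = 0 := by omega
          have e2 : g2 = 0 := by omega
          have e3 : g3 = 0 := by omega
          subst e1; subst e2; subst e3
          rcases hg with h|h|h|h|h|h|h|h <;> simp [Prod.ext_iff] at h
        · have hsub : x - z = (g1, g2, g3) := by
            simp [hz, Prod.ext_iff] <;> omega
          have hsub' : z - x = (-g1, -g2, -g3) := by
            simp [hz, Prod.ext_iff] <;> omega
          rw [hsub, hsub']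
          rcases hg with h|h|h|h|h|h|h|h <;>
            (injection h with h1 h'; injection h' with h2 h3;
             subst h1; subst h2; subst h3; norm_num)
      have hzle : triN (z.1 - y.1) (z.2.1 - y.2.1) (z.2.2 - y.2.2) ≤ n := by
        have : z.1 - y.1 = x.1 - y.1 - g1 ∧ z.2.1 - y.2.1 = x.2.1 - y.2.1 - g2 ∧
            z.2.2 - y.2.2 = x.2.2 - y.2.2 - g3 := by simp [hz]; omega
        rw [this.1, this.2.1, this.2.2]
        omega
      obtain ⟨w, hw⟩ := ih z y hzle
      exact ⟨SimpleGraph.Walk.cons hadj w, by simp; omega⟩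

lemma triN_le_walk {x y : ℤ × ℤ × ℤ} (w : triPrismaticGraph.Walk x y) :
    triN (x.1 - y.1) (x.2.1 - y.2.1) (x.2.2 - y.2.2) ≤ w.length := by
  induction w with
  | nil => simp [triN]
  | @cons a b c h p ih =>
    rw [triPrismaticGraph, SimpleGraph.fromRel_adj] at h
    obtain ⟨-, hrel⟩ := h
    simp only [SimpleGraph.Walk.length_cons]
    have step : ∀ g1 g2 g3 : ℤ,
        ((g1, g2, g3) = ((1:ℤ), (0:ℤ), (0:ℤ)) ∨ (g1, g2, g3) = (-1, 0, 0) ∨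
         (g1, g2, g3) = (0, 1, 0) ∨ (g1, g2, g3) = (0, -1, 0) ∨
         (g1, g2, g3) = (1, -1, 0) ∨ (g1, g2, g3) = (-1, 1, 0) ∨
         (g1, g2, g3) = (0, 0, 1) ∨ (g1, g2, g3) = (0, 0, -1)) →
        a.1 - b.1 = g1 → a.2.1 - b.2.1 = g2 → a.2.2 - b.2.2 = g3 →
        triN (a.1 - c.1) (a.2.1 - c.2.1) (a.2.2 - c.2.2) ≤ p.length + 1 := by
      intro g1 g2 g3 hg e1 e2 e3
      have f1 : a.1 - c.1 = (b.1 - c.1) + g1 := by omega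
      have f2 : a.2.1 - c.2.1 = (b.2.1 - c.2.1) + g2 := by omega
      have f3 : a.2.2 - c.2.2 = (b.2.2 - c.2.2) + g3 := by omega
      rw [f1, f2, f3]
      exact le_trans (triN_step _ _ _ _ _ _ hg) (by omega)
    rcases hrel with (h|h|h|h)|(h|h|h|h) <;> simp [Prod.ext_iff] at h
    · exact step 1 0 0 (by tauto) h.1 h.2.1 h.2.2
    · exact step 0 1 0 (by tauto) h.1 h.2.1 h.2.2
    · exact step 1 (-1) 0 (by tauto) h.1 h.2.1 h.2.2
    · exact step 0 0 1 (by tauto) h.1 h.2.1 h.2.2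
    · exact step (-1) 0 0 (by tauto) (by omega) (by omega) (by omega)
    · exact step 0 (-1) 0 (by tauto) (by omega) (by omega) (by omega)
    · exact step (-1) 1 0 (by tauto) (by omega) (by omega) (by omega)
    · exact step 0 0 (-1) (by tauto) (by omega) (by omega) (by omega)

lemma dist_eq_triN (x y : ℤ × ℤ × ℤ) :
    triPrismaticGraph.dist x y = triN (x.1 - y.1) (x.2.1 - y.2.1) (x.2.2 - y.2.2) := by
  obtain ⟨w, hw⟩ := walk_exists _ x y le_rfl
  have hreach : triPrismaticGraph.Reachable x y := ⟨w⟩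
  apply le_antisymm
  · exact le_trans (SimpleGraph.dist_le w) hw
  · obtain ⟨p, hp⟩ := hreach.exists_walk_length_eq_dist
    rw [← hp]
    exact triN_le_walk p

/-- The skeleton of `De(A₂ × ℤ)` embeds with scale 2 into `ℤ^4` via
`f(a,b,c) = (a, b, a+b, 2c)`. -/
theorem triPrismaticGraph_scale_two_embedding (x y : ℤ × ℤ × ℤ) :
    2 * (triPrismaticGraph.dist x y : ℤ) =
      |x.1 - y.1| + |x.2.1 - y.2.1| + |(x.1 + x.2.1) - (y.1 + y.2.1)| +
        |2 * x.2.2 - 2 * y.2.2| := by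
  rw [dist_eq_triN]
  simp only [triN, Int.abs_eq_natAbs]
  omega
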